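/- Let w : ZMod m → ℤ² be a closed squared spiral on m vertices that is a window (all turns have the same sign) and whose associated pair (S⁰, S¹) is an hv-convex switching. Then m is divisible by 4. -/

import Mathlib

/-- The four quadrant regions `Z_i(v)` in `ℤ²`. -/
def Zq (i : Fin 4) (v : ℤ × ℤ) : Set (ℤ × ℤ) :=
  match i with
  | 0 => {p | p.1 ≤ v.1 ∧ p.2 ≤ v.2}
  | 1 => {p | v.1 ≤ p.1 ∧ p.2 ≤ v.2}
  | 2 => {p | v.1 ≤ p.1 ∧ v.2 ≤ p.2}
  | 3 => {p | p.1 ≤ v.1 ∧ v.2 ≤ p.2}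

/-- Horizontal projection: the number of points of `S` on the horizontal line `y = c`. -/
noncomputable def hProj (S : Set (ℤ × ℤ)) (c : ℤ) : ℕ := {p ∈ S | p.2 = c}.ncard

/-- Vertical projection: the number of points of `S` on the vertical line `x = c`. -/
noncomputable def vProj (S : Set (ℤ × ℤ)) (c : ℤ) : ℕ := {p ∈ S | p.1 = c}.ncard

/-- An hv-switching: a pair of disjoint finite sets of equal cardinality having the same
horizontal and vertical projections. -/
def IsHvSwitching (S0 S1 : Set (ℤ × ℤ)) : Prop :=
  S0.Finite ∧ S1.Finite ∧ Disjoint S0 S1 ∧ S0.ncard = S1.ncard ∧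
    (∀ c : ℤ, hProj S0 c = hProj S1 c) ∧ (∀ c : ℤ, vProj S0 c = vProj S1 c)

/-- An hv-convex switching: an hv-switching in which every point has a free region,
i.e. a quadrant containing no point of the other component. -/
def IsHvConvexSwitching (S0 S1 : Set (ℤ × ℤ)) : Prop :=
  IsHvSwitching S0 S1 ∧ (∀ x ∈ S0, ∃ i : Fin 4, Zq i x ∩ S1 = ∅) ∧
    (∀ x ∈ S1, ∃ i : Fin 4, Zq i x ∩ S0 = ∅)

/-- A closed squared spiral on `m` vertices: an injective closed lattice path whose
segments are alternately horizontal (from even-indexed vertices) and vertical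
(from odd-indexed vertices). -/
structure IsClosedSquaredSpiral {m : ℕ} (w : ZMod m → ℤ × ℤ) : Prop where
  even_m : Even m
  four_le : 4 ≤ m
  inj : Function.Injective w
  horiz : ∀ i : ZMod m, Even i.val → (w (i + 1)).2 = (w i).2 ∧ (w (i + 1)).1 ≠ (w i).1
  vert : ∀ i : ZMod m, ¬ Even i.val → (w (i + 1)).1 = (w i).1 ∧ (w (i + 1)).2 ≠ (w i).2

/-- The turn `d(i) = u₁v₂ − u₂v₁` at vertex `i`, where `u = w i − w (i−1)` and
`v = w (i+1) − w i`. -/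
def turn {m : ℕ} (w : ZMod m → ℤ × ℤ) (i : ZMod m) : ℤ :=
  ((w i).1 - (w (i - 1)).1) * ((w (i + 1)).2 - (w i).2)
    - ((w i).2 - (w (i - 1)).2) * ((w (i + 1)).1 - (w i).1)

/-- A window: a squared spiral all of whose turns have the same sign. -/
def IsWindow {m : ℕ} (w : ZMod m → ℤ × ℤ) : Prop :=
  (∀ i : ZMod m, 0 < turn w i) ∨ (∀ i : ZMod m, turn w i < 0)

/-- The even-indexed vertices of a spiral. -/
def spiralEven {m : ℕ} (w : ZMod m → ℤ × ℤ) : Set (ℤ × ℤ) := w '' {i | Even i.val}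

/-- The odd-indexed vertices of a spiral. -/
def spiralOdd {m : ℕ} (w : ZMod m → ℤ × ℤ) : Set (ℤ × ℤ) := w '' {i | ¬ Even i.val}


/-- Direction class of edge `i` of a spiral, as an element of `ZMod 4`. -/
def dirCls {m : ℕ} (w : ZMod m → ℤ × ℤ) (i : ZMod m) : ZMod 4 :=
  if Even i.val then (if 0 < (w (i + 1)).1 - (w i).1 then 0 else 2)
  else (if 0 < (w (i + 1)).2 - (w i).2 then 1 else 3)

lemma parity_flip {m : ℕ} (hm : Even m) (h4 : 4 ≤ m) (i : ZMod m) :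
    Even (i + 1).val ↔ ¬ Even i.val := by
  haveI : NeZero m := ⟨by omega⟩
  haveI : Fact (1 < m) := ⟨by omega⟩
  have hv : (i + 1).val = (i.val + 1) % m := by
    rw [ZMod.val_add, ZMod.val_one]
  have hlt : i.val < m := ZMod.val_lt i
  obtain ⟨k, hk⟩ := hm
  rcases eq_or_lt_of_le (Nat.succ_le_of_lt hlt) with heq | hlt2
  · have h0 : (i + 1).val = 0 := by
      rw [hv, show i.val + 1 = m from heq, Nat.mod_self]
    rw [h0]
    have hik : i.val + 1 = k + k := by omega
    constructor
    · intro _ hc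
      obtain ⟨j, hj⟩ := hc
      omega
    · intro _
      exact Even.zero
  · rw [hv, Nat.mod_eq_of_lt hlt2, Nat.even_add_one]

lemma dirCls_step {m : ℕ} (w : ZMod m → ℤ × ℤ) (hw : IsClosedSquaredSpiral w)
    (ε : ZMod 4) (hε : ε = 1 ∨ ε = -1)
    (hturn : ∀ i : ZMod m, if ε = 1 then 0 < turn w i else turn w i < 0)
    (i : ZMod m) : dirCls w (i + 1) = dirCls w i + ε := by
  have hpar : Even (i + 1).val ↔ ¬ Even i.val := parity_flip hw.even_m hw.four_le i
  have h := hturn (i + 1)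
  by_cases hi : Even i.val
  · have hi1 : ¬ Even (i + 1).val := fun hc => (hpar.mp hc) hi
    obtain ⟨h1, _⟩ := hw.horiz i hi
    obtain ⟨h3, _⟩ := hw.vert (i + 1) hi1
    have ht : turn w (i + 1) =
        ((w (i + 1)).1 - (w i).1) * ((w (i + 1 + 1)).2 - (w (i + 1)).2) := by
      simp only [turn, add_sub_cancel_right]
      rw [h1, h3]
      ring
    have e1 : dirCls w i = if 0 < (w (i + 1)).1 - (w i).1 then 0 else 2 := by
      simp [dirCls, hi]
    have e2 : dirCls w (i + 1) =
        if 0 < (w (i + 1 + 1)).2 - (w (i + 1)).2 then 1 else 3 := by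
      simp [dirCls, hi1]
    rcases hε with hε | hε
    · rw [hε] at h ⊢
      rw [if_pos rfl, ht] at h
      rcases mul_pos_iff.mp h with ⟨ha, hb⟩ | ⟨ha, hb⟩ <;>
        simp only [e1, e2, ha, hb, not_lt.mpr ha.le, not_lt.mpr hb.le, ↓reduceIte] <;> decide
    · rw [hε] at h ⊢
      rw [if_neg (by decide), ht] at h
      rcases mul_neg_iff.mp h with ⟨ha, hb⟩ | ⟨ha, hb⟩ <;>
        simp only [e1, e2, ha, hb, not_lt.mpr ha.le, not_lt.mpr hb.le, ↓reduceIte] <;> decide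
  · have hi1 : Even (i + 1).val := hpar.mpr hi
    obtain ⟨h1, _⟩ := hw.vert i hi
    obtain ⟨h3, _⟩ := hw.horiz (i + 1) hi1
    have ht : turn w (i + 1) =
        -(((w (i + 1)).2 - (w i).2) * ((w (i + 1 + 1)).1 - (w (i + 1)).1)) := by
      simp only [turn, add_sub_cancel_right]
      rw [h1, h3]
      ring
    have e1 : dirCls w i = if 0 < (w (i + 1)).2 - (w i).2 then 1 else 3 := by
      simp [dirCls, hi]
    have e2 : dirCls w (i + 1) =
        if 0 < (w (i + 1 + 1)).1 - (w (i + 1)).1 then 0 else 2 := by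
      simp [dirCls, hi1]
    rcases hε with hε | hε
    · rw [hε] at h ⊢
      rw [if_pos rfl, ht, neg_pos] at h
      rcases mul_neg_iff.mp h with ⟨ha, hb⟩ | ⟨ha, hb⟩ <;>
        simp only [e1, e2, ha, hb, not_lt.mpr ha.le, not_lt.mpr hb.le, ↓reduceIte] <;> decide
    · rw [hε] at h ⊢
      rw [if_neg (by decide), ht, neg_neg_iff_pos] at h
      rcases mul_pos_iff.mp h with ⟨ha, hb⟩ | ⟨ha, hb⟩ <;>
        simp only [e1, e2, ha, hb, not_lt.mpr ha.le, not_lt.mpr hb.le, ↓reduceIte] <;> decide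

/-- if a window on `m` vertices is an hv-convex switching, then `4 ∣ m`. -/
theorem stmt8 (m : ℕ) (w : ZMod m → ℤ × ℤ) (hw : IsClosedSquaredSpiral w)
    (hwin : IsWindow w)
    (hconv : IsHvConvexSwitching (spiralEven w) (spiralOdd w)) :
    4 ∣ m := by
  classical
  have key : ∃ ε : ZMod 4, (ε = 1 ∨ ε = -1) ∧
      ∀ i : ZMod m, dirCls w (i + 1) = dirCls w i + ε := by
    rcases hwin with hpos | hneg
    · exact ⟨1, Or.inl rfl, dirCls_step w hw 1 (Or.inl rfl)
        (fun i => by simp [hpos i])⟩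
    · refine ⟨-1, Or.inr rfl, dirCls_step w hw (-1) (Or.inr rfl) (fun i => ?_)⟩
      have hne : (-1 : ZMod 4) ≠ 1 := by decide
      simp [hne, hneg i]
  obtain ⟨ε, hε, hstep⟩ := key
  have claim : ∀ n : ℕ, dirCls w ((n : ℕ) : ZMod m) = dirCls w 0 + (n : ZMod 4) * ε := by
    intro n
    induction n with
    | zero => simp
    | succ n ih =>
      have hc : (((n + 1 : ℕ)) : ZMod m) = ((n : ℕ) : ZMod m) + 1 := by push_cast; ring
      rw [hc, hstep, ih]
      push_cast
      ring
  have h := claim m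
  rw [ZMod.natCast_self] at h
  have hz : (m : ZMod 4) * ε = 0 := (left_eq_add.mp h)
  have hm4 : (m : ZMod 4) = 0 := by
    rcases hε with hε | hε <;> rw [hε] at hz
    · simpa using hz
    · have hn : -(m : ZMod 4) = 0 := by simpa [mul_neg] using hz
      simpa using neg_eq_zero.mp hn
  exact (ZMod.natCast_eq_zero_iff m 4).mp hm4
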